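/- arXiv:1308.0903 — 2 statements merged into one kernel-verified Lean document; each statement's English description precedes it below -/
import Mathlib

section
/- Every complex linear hyperplane of ℂ³ intersects 𝔄 ∖ {0}; that is, for every nonzero complex linear functional L on ℂ³ there exists z ∈ ℂ³ with z ≠ 0, L(z) = 0, and z₁² + z₂² + z₃² = 0. -/
theorem hyperplane_meets_null_quadric (L : (ℂ × ℂ × ℂ) →ₗ[ℂ] ℂ) (hL : L ≠ 0) :
    ∃ z : ℂ × ℂ × ℂ, z ≠ 0 ∧ L z = 0 ∧ z.1 ^ 2 + z.2.1 ^ 2 + z.2.2 ^ 2 = 0 := by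
  obtain ⟨a, ha⟩ : ∃ x, L (1, 0, 0) = x := ⟨_, rfl⟩
  obtain ⟨b, hb⟩ : ∃ x, L (0, 1, 0) = x := ⟨_, rfl⟩
  obtain ⟨c, hc⟩ : ∃ x, L (0, 0, 1) = x := ⟨_, rfl⟩
  have key : ∀ p : ℂ × ℂ × ℂ, L p = p.1 * a + p.2.1 * b + p.2.2 * c := by
    intro p
    have hp : p = p.1 • ((1:ℂ), (0:ℂ), (0:ℂ)) + p.2.1 • ((0:ℂ), (1:ℂ), (0:ℂ))
        + p.2.2 • ((0:ℂ), (0:ℂ), (1:ℂ)) := by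
      obtain ⟨x, y, z⟩ := p
      simp [Prod.ext_iff]
    rw [hp, map_add, map_add, map_smul, map_smul, map_smul, ha, hb, hc]
    simp [smul_eq_mul]
  have habc : ¬ (a = 0 ∧ b = 0 ∧ c = 0) := by
    rintro ⟨h1, h2, h3⟩
    apply hL
    apply LinearMap.ext
    intro p
    rw [key p, h1, h2, h3]
    simp
  obtain ⟨r, hr⟩ : ∃ r : ℂ, r ^ 2 = a ^ 2 + b ^ 2 + c ^ 2 :=
    IsAlgClosed.exists_pow_nat_eq (a ^ 2 + b ^ 2 + c ^ 2) (n := 2) (by norm_num)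
  have hI : Complex.I ^ 2 = -1 := Complex.I_sq
  by_cases hQ : a ^ 2 + b ^ 2 + c ^ 2 = 0
  · refine ⟨(a, b, c), ?_, ?_, ?_⟩
    · intro h
      apply habc
      rw [Prod.ext_iff, Prod.ext_iff] at h
      exact ⟨h.1, h.2.1, h.2.2⟩
    · rw [key]; linear_combination hQ
    · exact hQ
  · by_cases h1 : a ^ 2 + c ^ 2 ≠ 0
    · refine ⟨(-(a*b) + Complex.I * c * r, a ^ 2 + c ^ 2, -(b*c) - Complex.I * a * r), ?_, ?_, ?_⟩
      · intro h
        apply h1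
        have := congrArg (fun z : ℂ × ℂ × ℂ => z.2.1) h
        simpa using this
      · rw [key]; ring
      · linear_combination (-(a^2 + c^2)) * hr + ((a^2 + c^2) * r^2) * hI
    · push_neg at h1
      by_cases h2 : b ^ 2 + c ^ 2 ≠ 0
      · refine ⟨(b ^ 2 + c ^ 2, -(a*b) + Complex.I * c * r, -(a*c) - Complex.I * b * r), ?_, ?_, ?_⟩
        · intro h
          apply h2
          have := congrArg (fun z : ℂ × ℂ × ℂ => z.1) h
          simpa using this
        · rw [key]; ring
        · linear_combination (-(b^2 + c^2)) * hr + ((b^2 + c^2) * r^2) * hI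
      · push_neg at h2
        have h3 : a ^ 2 + b ^ 2 ≠ 0 := by
          intro h3
          apply hQ
          have h2Q : 2 * (a^2 + b^2 + c^2) = 0 := by linear_combination h1 + h2 + h3
          linear_combination h2Q / 2
        refine ⟨(-(a*c) + Complex.I * b * r, -(b*c) - Complex.I * a * r, a ^ 2 + b ^ 2), ?_, ?_, ?_⟩
        · intro h
          apply h3
          have := congrArg (fun z : ℂ × ℂ × ℂ => z.2.2) h
          simpa using this
        · rw [key]; ring
        · linear_combination (-(a^2 + b^2)) * hr + ((a^2 + b^2) * r^2) * hI
end

section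
/- The map 𝒯(z₁,z₂,z₃) = (1/z₃)·[[1, z₁+iz₂],[z₁−iz₂, z₁²+z₂²+z₃²]] is a bijection from {z ∈ ℂ³ : z₃ ≠ 0} onto {A ∈ SL₂(ℂ) : A₁₁ ≠ 0}. -/
theorem T_bijection :
    Set.BijOn
      (fun z : ℂ × ℂ × ℂ =>
        (z.2.2)⁻¹ • !![1, z.1 + Complex.I * z.2.1;
                       z.1 - Complex.I * z.2.1, z.1 ^ 2 + z.2.1 ^ 2 + z.2.2 ^ 2])
      {z : ℂ × ℂ × ℂ | z.2.2 ≠ 0}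
      {A : Matrix (Fin 2) (Fin 2) ℂ | A.det = 1 ∧ A 0 0 ≠ 0} := by
  constructor
  · -- MapsTo
    rintro ⟨z1, z2, z3⟩ hz
    simp only [Set.mem_setOf_eq] at hz ⊢
    constructor
    · rw [Matrix.det_smul, Matrix.det_fin_two_of, Fintype.card_fin]
      field_simp
      linear_combination z2 ^ 2 * Complex.I_sq
    · simp [Matrix.smul_apply, hz]
  constructor
  · -- InjOn
    rintro ⟨z1, z2, z3⟩ hz ⟨w1, w2, w3⟩ hw h
    simp only [Set.mem_setOf_eq] at hz hw
    have h00 := congrFun (congrFun h 0) 0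
    have h01 := congrFun (congrFun h 0) 1
    have h10 := congrFun (congrFun h 1) 0
    simp only [Matrix.smul_apply, Matrix.cons_val', Matrix.cons_val_zero,
      Matrix.cons_val_one, Matrix.head_cons, Matrix.empty_val',
      Matrix.cons_val_fin_one, Matrix.head_fin_const, smul_eq_mul, Matrix.of_apply] at h00 h01 h10
    have h3 : z3 = w3 := by
      have := inv_injective (by simpa using h00)
      exact this
    subst h3
    have e1 : z1 + Complex.I * z2 = w1 + Complex.I * w2 := by
      field_simp at h01; linear_combination h01
    have e2 : z1 - Complex.I * z2 = w1 - Complex.I * w2 := by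
      field_simp at h10; linear_combination h10
    have hz1 : z1 = w1 := by linear_combination (e1 + e2) / 2
    have hz2 : z2 = w2 := by
      have hI : (Complex.I : ℂ) ≠ 0 := Complex.I_ne_zero
      have : Complex.I * z2 = Complex.I * w2 := by linear_combination (e1 - e2) / 2
      exact mul_left_cancel₀ hI this
    simp [hz1, hz2]
  · -- SurjOn
    rintro A ⟨hdet, ha⟩
    rw [Matrix.det_fin_two] at hdet
    refine ⟨((A 0 1 + A 1 0) / (2 * A 0 0), -Complex.I * (A 0 1 - A 1 0) / (2 * A 0 0),
      (A 0 0)⁻¹), ?_, ?_⟩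
    · simp [Set.mem_setOf_eq, ha]
    · simp only
      ext i j
      fin_cases i <;> fin_cases j
      · simp [Matrix.smul_apply, ha]
      · simp only [Fin.zero_eta, Fin.mk_one, Matrix.smul_apply, Matrix.cons_val', Matrix.cons_val_zero,
          Matrix.cons_val_one, Matrix.head_cons, Matrix.empty_val',
          Matrix.cons_val_fin_one, Matrix.head_fin_const, smul_eq_mul, Matrix.of_apply]
        field_simp
        linear_combination
          (-(A 0 1) + A 1 0) * Complex.I_sq
      · simp only [Fin.zero_eta, Fin.mk_one, Matrix.smul_apply, Matrix.cons_val', Matrix.cons_val_zero,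
          Matrix.cons_val_one, Matrix.head_cons, Matrix.empty_val',
          Matrix.cons_val_fin_one, Matrix.head_fin_const, smul_eq_mul, Matrix.of_apply]
        field_simp
        linear_combination
          (A 0 1 - A 1 0) * Complex.I_sq
      · simp only [Fin.zero_eta, Fin.mk_one, Matrix.smul_apply, Matrix.cons_val', Matrix.cons_val_zero,
          Matrix.cons_val_one, Matrix.head_cons, Matrix.empty_val',
          Matrix.cons_val_fin_one, Matrix.head_fin_const, smul_eq_mul, Matrix.of_apply]
        field_simp
        linear_combination (-4) * hdet +
          (A 0 1 ^ 2 + A 1 0 ^ 2 -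
            2 * A 0 1 * A 1 0) * Complex.I_sq
end
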